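/- arXiv:1909.04289 — 2 statements merged into one kernel-verified Lean document; each statement's English description precedes it below -/
import Mathlib

section
/- Averaging lemma for two well-separated scales: let h : ℝ × ℝ → ℝ be C¹, 1-periodic in its second variable, with ‖h‖ and ‖∂₁h‖ bounded by M. Then for 0 < ε₂ ≤ ε₁ and any a < b, |∫_a^b h(t/ε₁, t/ε₂) dt − ∫_a^b (∫₀¹ h(t/ε₁, s) ds) dt| ≤ C (ε₂/ε₁) where C depends only on M, a, b. -/
open MeasureTheory

/-- Averaging lemma for two well-separated scales: for `h : ℝ × ℝ → ℝ` of class `C¹`,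
1-periodic in its second variable, with `‖h‖` and `‖∂₁h‖` bounded by `M`, one has
`|∫_a^b h(t/ε₁, t/ε₂) dt − ∫_a^b (∫₀¹ h(t/ε₁, s) ds) dt| ≤ C ε₂/ε₁` where `C`
depends only on `M`, `a`, `b`. -/
theorem two_scale_averaging (M a b : ℝ) (hM : 0 ≤ M) (hab : a < b) :
    ∃ C : ℝ, ∀ h : ℝ → ℝ → ℝ,
      ContDiff ℝ 1 (fun p : ℝ × ℝ => h p.1 p.2) →
      (∀ u v : ℝ, h u (v + 1) = h u v) →
      (∀ u v : ℝ, |h u v| ≤ M) →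
      (∀ u v : ℝ, |deriv (fun u' => h u' v) u| ≤ M) →
      ∀ ε₁ ε₂ : ℝ, 0 < ε₂ → ε₂ ≤ ε₁ → ε₁ ≤ 1 →
        |(∫ t in a..b, h (t / ε₁) (t / ε₂)) -
          ∫ t in a..b, ∫ s in (0:ℝ)..1, h (t / ε₁) s| ≤ C * (ε₂ / ε₁) := by
  refine ⟨2 * M * (b - a + 2), ?_⟩
  intro h hC hper hbd hbd' ε₁ ε₂ hε₂ hle hε₁1
  have hε₁ : 0 < ε₁ := lt_of_lt_of_le hε₂ hle
  have hcont : Continuous fun p : ℝ × ℝ => h p.1 p.2 := hC.continuous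
  have hcont2 : ∀ u : ℝ, Continuous (h u) := fun u =>
    hcont.comp (continuous_const.prodMk continuous_id)
  have hcont1 : Continuous fun t : ℝ => h (t / ε₁) (t / ε₂) :=
    hcont.comp ((continuous_id.div_const ε₁).prodMk (continuous_id.div_const ε₂))
  set A : ℝ → ℝ := fun u => ∫ s in (0:ℝ)..1, h u s with hA
  have hAcont : Continuous A := by
    apply intervalIntegral.continuous_parametric_intervalIntegral_of_continuous'
    exact hcont
  have hAbd : ∀ u : ℝ, |A u| ≤ M := by
    intro u
    have := intervalIntegral.norm_integral_le_of_norm_le_const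
      (a := (0:ℝ)) (b := 1) (C := M) (f := h u)
      (fun x _ => by simpa using hbd u x)
    simpa using this
  -- Lipschitz in the first variable
  have hLip : ∀ v u u' : ℝ, |h u v - h u' v| ≤ M * |u - u'| := by
    intro v u u'
    have hd : ∀ x : ℝ, DifferentiableAt ℝ (fun x' : ℝ => h x' v) x := by
      intro x
      have : ContDiff ℝ 1 (fun x' : ℝ => h x' v) :=
        hC.comp (contDiff_id.prodMk contDiff_const)
      exact this.differentiable one_ne_zero x
    have := convex_univ.norm_image_sub_le_of_norm_deriv_le
      (f := fun x' : ℝ => h x' v) (fun x _ => hd x)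
      (fun x _ => by simpa using hbd' x v) (Set.mem_univ u') (Set.mem_univ u)
    simpa [Real.norm_eq_abs] using this
  have hALip : ∀ u u' : ℝ, |A u - A u'| ≤ M * |u - u'| := by
    intro u u'
    have hint1 : IntervalIntegrable (h u) volume 0 1 := (hcont2 u).intervalIntegrable _ _
    have hint2 : IntervalIntegrable (h u') volume 0 1 := (hcont2 u').intervalIntegrable _ _
    have : A u - A u' = ∫ s in (0:ℝ)..1, (h u s - h u' s) :=
      (intervalIntegral.integral_sub hint1 hint2).symm
    rw [this]
    have := intervalIntegral.norm_integral_le_of_norm_le_const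
      (a := (0:ℝ)) (b := 1) (C := M * |u - u'|)
      (f := fun s => h u s - h u' s)
      (fun x _ => by simpa using hLip x u u')
    simpa using this
  set f : ℝ → ℝ := fun t => h (t / ε₁) (t / ε₂) - A (t / ε₁) with hf
  have hcontA1 : Continuous fun t : ℝ => A (t / ε₁) :=
    hAcont.comp (continuous_id.div_const ε₁)
  have hfcont : Continuous f := hcont1.sub hcontA1
  have hfint : ∀ c d : ℝ, IntervalIntegrable f volume c d :=
    fun c d => hfcont.intervalIntegrable c d
  have hfbd : ∀ t : ℝ, |f t| ≤ 2 * M := by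
    intro t
    calc |f t| ≤ |h (t / ε₁) (t / ε₂)| + |A (t / ε₁)| := abs_sub _ _
    _ ≤ M + M := add_le_add (hbd _ _) (hAbd _)
    _ = 2 * M := by ring
  -- key per-interval estimate
  have key : ∀ c : ℝ, |∫ t in c..(c + ε₂), f t| ≤ 2 * M * (ε₂ / ε₁) * ε₂ := by
    intro c
    set u₀ : ℝ := c / ε₁ with hu₀
    have h1 : (∫ t in c..(c + ε₂), h u₀ (t / ε₂)) = ε₂ * A u₀ := by
      rw [intervalIntegral.integral_comp_div (f := h u₀) (c := ε₂) hε₂.ne']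
      have e1 : (c + ε₂) / ε₂ = c / ε₂ + 1 := by field_simp
      rw [e1]
      have hper' : Function.Periodic (h u₀) 1 := fun v => hper u₀ v
      rw [hper'.intervalIntegral_add_eq (c / ε₂) 0]
      simp [smul_eq_mul, hA]
    have hcont3 : Continuous fun t : ℝ => h u₀ (t / ε₂) :=
      (hcont2 u₀).comp (continuous_id.div_const ε₂)
    have hint0 : IntervalIntegrable (fun t => h u₀ (t / ε₂)) volume c (c + ε₂) :=
      hcont3.intervalIntegrable _ _
    have hint1 : IntervalIntegrable (fun t => h (t / ε₁) (t / ε₂) - h u₀ (t / ε₂))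
        volume c (c + ε₂) := (hcont1.sub hcont3).intervalIntegrable _ _
    have hint3 : IntervalIntegrable (fun t => A u₀ - A (t / ε₁)) volume c (c + ε₂) :=
      (continuous_const.sub hcontA1).intervalIntegrable _ _
    have hint2 : IntervalIntegrable (fun t => h u₀ (t / ε₂) - A u₀) volume c (c + ε₂) :=
      (hcont3.sub continuous_const).intervalIntegrable _ _
    have split : (∫ t in c..(c + ε₂), f t)
        = (∫ t in c..(c + ε₂), (h (t / ε₁) (t / ε₂) - h u₀ (t / ε₂)))
          + (∫ t in c..(c + ε₂), (h u₀ (t / ε₂) - A u₀))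
          + (∫ t in c..(c + ε₂), (A u₀ - A (t / ε₁))) := by
      rw [← intervalIntegral.integral_add hint1 hint2,
        ← intervalIntegral.integral_add (hint1.add hint2) hint3]
      congr 1
      funext t
      simp only [hf]
      ring
    have mid : (∫ t in c..(c + ε₂), (h u₀ (t / ε₂) - A u₀)) = 0 := by
      have e : c + ε₂ - c = ε₂ := by ring
      rw [intervalIntegral.integral_sub hint0 intervalIntegrable_const, h1,
        intervalIntegral.integral_const, smul_eq_mul, e, sub_self]
    -- pointwise bounds on the interval
    have hmem : ∀ t ∈ Set.uIoc c (c + ε₂), |t / ε₁ - u₀| ≤ ε₂ / ε₁ := by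
      intro t ht
      rw [Set.uIoc_of_le (by linarith)] at ht
      have h1' : c < t := ht.1
      have h2' : t ≤ c + ε₂ := ht.2
      rw [hu₀, div_sub_div_same, abs_div, abs_of_pos hε₁]
      apply (div_le_div_iff_of_pos_right hε₁).mpr
      rw [abs_of_nonneg (by linarith)]
      linarith
    have b1 : |∫ t in c..(c + ε₂), (h (t / ε₁) (t / ε₂) - h u₀ (t / ε₂))|
        ≤ M * (ε₂ / ε₁) * ε₂ := by
      have := intervalIntegral.norm_integral_le_of_norm_le_const
        (C := M * (ε₂ / ε₁)) (f := fun t => h (t / ε₁) (t / ε₂) - h u₀ (t / ε₂))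
        (a := c) (b := c + ε₂) (fun t ht => by
          have := (hLip (t / ε₂) (t / ε₁) u₀).trans
            (mul_le_mul_of_nonneg_left (hmem t ht) hM)
          simpa using this)
      rw [Real.norm_eq_abs] at this
      have e : |c + ε₂ - c| = ε₂ := by rw [add_sub_cancel_left, abs_of_pos hε₂]
      calc |∫ t in c..(c + ε₂), (h (t / ε₁) (t / ε₂) - h u₀ (t / ε₂))|
          ≤ M * (ε₂ / ε₁) * |c + ε₂ - c| := this
        _ = M * (ε₂ / ε₁) * ε₂ := by rw [e]
    have b3 : |∫ t in c..(c + ε₂), (A u₀ - A (t / ε₁))| ≤ M * (ε₂ / ε₁) * ε₂ := by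
      have := intervalIntegral.norm_integral_le_of_norm_le_const
        (C := M * (ε₂ / ε₁)) (f := fun t => A u₀ - A (t / ε₁))
        (a := c) (b := c + ε₂) (fun t ht => by
          have h'' : |u₀ - t / ε₁| ≤ ε₂ / ε₁ := by
            rw [abs_sub_comm]; exact hmem t ht
          have h' := (hALip u₀ (t / ε₁)).trans
            (mul_le_mul_of_nonneg_left h'' hM)
          simpa using h')
      rw [Real.norm_eq_abs] at this
      have e : |c + ε₂ - c| = ε₂ := by rw [add_sub_cancel_left, abs_of_pos hε₂]
      calc |∫ t in c..(c + ε₂), (A u₀ - A (t / ε₁))|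
          ≤ M * (ε₂ / ε₁) * |c + ε₂ - c| := this
        _ = M * (ε₂ / ε₁) * ε₂ := by rw [e]
    calc |∫ t in c..(c + ε₂), f t|
        = |(∫ t in c..(c + ε₂), (h (t / ε₁) (t / ε₂) - h u₀ (t / ε₂)))
            + (∫ t in c..(c + ε₂), (A u₀ - A (t / ε₁)))| := by rw [split, mid, add_zero]
      _ ≤ |∫ t in c..(c + ε₂), (h (t / ε₁) (t / ε₂) - h u₀ (t / ε₂))|
            + |∫ t in c..(c + ε₂), (A u₀ - A (t / ε₁))| := abs_add_le _ _
      _ ≤ M * (ε₂ / ε₁) * ε₂ + M * (ε₂ / ε₁) * ε₂ := add_le_add b1 b3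
      _ = 2 * M * (ε₂ / ε₁) * ε₂ := by ring
  -- set up the partition
  set N : ℕ := ⌈(b - a) / ε₂⌉₊ with hN
  have hx0 : (0:ℝ) ≤ (b - a) / ε₂ := div_nonneg (by linarith) hε₂.le
  have hN1 : b - a ≤ (N : ℝ) * ε₂ := by
    have := Nat.le_ceil ((b - a) / ε₂)
    rw [div_le_iff₀ hε₂] at this
    exact this
  have hN2 : (N : ℝ) * ε₂ < b - a + ε₂ := by
    have := Nat.ceil_lt_add_one hx0
    have := (mul_lt_mul_of_pos_right this hε₂)
    rw [add_mul, one_mul, div_mul_cancel₀ _ hε₂.ne'] at this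
    exact this
  set b' : ℝ := a + (N : ℝ) * ε₂ with hb'
  have hbb' : b ≤ b' := by rw [hb']; linarith
  have hb'b : b' - b < ε₂ := by rw [hb']; linarith
  have hsum : (∑ k ∈ Finset.range N, ∫ t in (a + (k:ℝ) * ε₂)..(a + ((k:ℝ) + 1) * ε₂), f t)
      = ∫ t in a..b', f t := by
    have := intervalIntegral.sum_integral_adjacent_intervals
      (a := fun k : ℕ => a + (k : ℝ) * ε₂) (f := f) (μ := volume) (n := N)
      (fun k _ => hfint _ _)
    simp only [Nat.cast_zero, zero_mul, add_zero] at this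
    rw [← this]
    apply Finset.sum_congr rfl
    intro k _
    push_cast
    ring_nf
  have hsum_bd : |∫ t in a..b', f t| ≤ 2 * M * (ε₂ / ε₁) * ((N : ℝ) * ε₂) := by
    rw [← hsum]
    calc |∑ k ∈ Finset.range N, ∫ t in (a + (k:ℝ) * ε₂)..(a + ((k:ℝ) + 1) * ε₂), f t|
        ≤ ∑ k ∈ Finset.range N, |∫ t in (a + (k:ℝ) * ε₂)..(a + ((k:ℝ) + 1) * ε₂), f t| :=
          Finset.abs_sum_le_sum_abs _ _
      _ ≤ ∑ _k ∈ Finset.range N, 2 * M * (ε₂ / ε₁) * ε₂ := by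
          apply Finset.sum_le_sum
          intro k _
          have e : a + ((k:ℝ) + 1) * ε₂ = (a + (k:ℝ) * ε₂) + ε₂ := by ring
          rw [e]
          exact key _
      _ = (N : ℝ) * (2 * M * (ε₂ / ε₁) * ε₂) := by
          rw [Finset.sum_const, Finset.card_range, nsmul_eq_mul]
      _ = 2 * M * (ε₂ / ε₁) * ((N : ℝ) * ε₂) := by ring
  have htail : |∫ t in b..b', f t| ≤ 2 * M * ε₂ := by
    have := intervalIntegral.norm_integral_le_of_norm_le_const
      (C := 2 * M) (f := f) (a := b) (b := b') (fun t _ => by simpa using hfbd t)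
    rw [Real.norm_eq_abs] at this
    calc |∫ t in b..b', f t| ≤ 2 * M * |b' - b| := this
      _ ≤ 2 * M * ε₂ := by
        apply mul_le_mul_of_nonneg_left _ (by linarith)
        rw [abs_of_nonneg (by linarith)]
        linarith
  have hsplit : (∫ t in a..b, f t) = (∫ t in a..b', f t) - ∫ t in b..b', f t := by
    rw [← intervalIntegral.integral_add_adjacent_intervals (hfint a b) (hfint b b')]
    ring
  -- final assembly
  have hgoal_eq : (∫ t in a..b, h (t / ε₁) (t / ε₂)) -
      (∫ t in a..b, ∫ s in (0:ℝ)..1, h (t / ε₁) s) = ∫ t in a..b, f t := by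
    rw [← intervalIntegral.integral_sub (hcont1.intervalIntegrable a b)
      (hcontA1.intervalIntegrable a b)]
  rw [hgoal_eq, hsplit]
  have hε₂ε₁ : ε₂ ≤ ε₂ / ε₁ := by
    rw [le_div_iff₀ hε₁]
    nlinarith
  have hNε₂ : (N : ℝ) * ε₂ ≤ b - a + 1 := by
    have : ε₂ ≤ 1 := hle.trans hε₁1
    linarith
  have hratio : 0 ≤ ε₂ / ε₁ := div_nonneg hε₂.le hε₁.le
  calc |(∫ t in a..b', f t) - ∫ t in b..b', f t|
      ≤ |∫ t in a..b', f t| + |∫ t in b..b', f t| := abs_sub _ _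
    _ ≤ 2 * M * (ε₂ / ε₁) * ((N : ℝ) * ε₂) + 2 * M * ε₂ := add_le_add hsum_bd htail
    _ ≤ 2 * M * (ε₂ / ε₁) * (b - a + 1) + 2 * M * (ε₂ / ε₁) := by
        apply add_le_add
        · exact mul_le_mul_of_nonneg_left hNε₂ (by positivity)
        · exact mul_le_mul_of_nonneg_left hε₂ε₁ (by linarith)
    _ = 2 * M * (b - a + 2) * (ε₂ / ε₁) := by ring
end

section
/- Non-stiffness of the transformed drift in the single-scale case: with F(t,x) := (I + ε ∂ₓg(t/ε, x))⁻¹ ( f̄(x) + f₁(t/ε, Φ(t/ε,x)) − f₁(t/ε, x) ) where Φ(τ,x) = x + ε g(τ,x), the time derivative ∂ₜF is bounded by a constant C₀ independent of ε, provided f̄, f₁ are C² with bounded derivatives, f₁ is 1-periodic mean-zero in its first argument, and ε is small enough that ‖ε ∂ₓg‖ ≤ 1/2 uniformly. -/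
open MeasureTheory

section Aux

lemma nonstiff_inv_aux {d : ℕ} (a : (Fin d → ℝ) →L[ℝ] (Fin d → ℝ)) (ha : ‖a - 1‖ ≤ 1/2) :
    a * Ring.inverse a = 1 ∧ Ring.inverse a * a = 1 ∧ ‖Ring.inverse a‖ ≤ 2 := by
  have h1 : ‖(1 : (Fin d → ℝ) →L[ℝ] (Fin d → ℝ)) - a‖ < 1 := by
    rw [norm_sub_rev]; linarith
  set u := Units.oneSub (1 - a) h1 with hu_def
  have hu : (u : (Fin d → ℝ) →L[ℝ] (Fin d → ℝ)) = a := by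
    rw [hu_def, Units.val_oneSub, sub_sub_cancel]
  have hinv : Ring.inverse a = ↑u⁻¹ := by rw [← hu, Ring.inverse_unit]
  have hmul : a * Ring.inverse a = 1 := by rw [hinv, ← hu]; exact u.mul_inv
  have hmul' : Ring.inverse a * a = 1 := by rw [hinv, ← hu]; exact u.inv_mul
  refine ⟨hmul, hmul', ?_⟩
  set v := Ring.inverse a with hv_def
  have hv : v = 1 - (a - 1) * v := by
    have : (a - 1) * v = 1 - v := by rw [sub_mul, one_mul, hmul]
    rw [this, sub_sub_cancel]
  have hone : ‖(1 : (Fin d → ℝ) →L[ℝ] (Fin d → ℝ))‖ ≤ 1 := by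
    rw [ContinuousLinearMap.one_def]; exact ContinuousLinearMap.norm_id_le
  have hn : ‖v‖ ≤ 1 + (1/2) * ‖v‖ := by
    calc ‖v‖ = ‖1 - (a - 1) * v‖ := by rw [← hv]
    _ ≤ ‖(1 : (Fin d → ℝ) →L[ℝ] (Fin d → ℝ))‖ + ‖(a - 1) * v‖ := norm_sub_le _ _
    _ ≤ 1 + ‖a - 1‖ * ‖v‖ := add_le_add hone (norm_mul_le _ _)
    _ ≤ 1 + (1/2) * ‖v‖ := by
        have := norm_nonneg v
        nlinarith
  linarith

lemma nonstiff_inv_diff_aux {d : ℕ} (a b : (Fin d → ℝ) →L[ℝ] (Fin d → ℝ))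
    (ha : ‖a - 1‖ ≤ 1/2) (hb : ‖b - 1‖ ≤ 1/2) :
    ‖Ring.inverse a - Ring.inverse b‖ ≤ 4 * ‖a - b‖ := by
  obtain ⟨haR, haL, haN⟩ := nonstiff_inv_aux a ha
  obtain ⟨hbR, hbL, hbN⟩ := nonstiff_inv_aux b hb
  set v := Ring.inverse a with hv
  set w := Ring.inverse b with hw
  have key : v - w = v * (b - a) * w := by
    have : v * (b - a) * w = v * (b * w) - (v * a) * w := by
      rw [mul_sub, sub_mul, mul_assoc]
    rw [this, hbR, haL, mul_one, one_mul]
  rw [key]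
  calc ‖v * (b - a) * w‖ ≤ ‖v * (b - a)‖ * ‖w‖ := norm_mul_le _ _
  _ ≤ ‖v‖ * ‖b - a‖ * ‖w‖ := by
      have := norm_nonneg w
      nlinarith [norm_mul_le v (b - a), norm_nonneg (v * (b-a))]
  _ ≤ 4 * ‖a - b‖ := by
      rw [norm_sub_rev b a]
      have h1 := norm_nonneg (a - b)
      have h2 : ‖v‖ * ‖a - b‖ * ‖w‖ ≤ 2 * ‖a - b‖ * 2 :=
        mul_le_mul (mul_le_mul haN le_rfl h1 (by norm_num)) hbN (norm_nonneg w) (by positivity)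
      linarith

end Aux

set_option maxHeartbeats 2000000 in
/-- Non-stiffness of the transformed drift in the single-scale case: with
`F(t,x) = (I + ε ∂ₓg(t/ε,x))⁻¹ (f̄(x) + f₁(t/ε, Φ(t/ε,x)) − f₁(t/ε,x))` where
`Φ(τ,x) = x + ε g(τ,x)` and `g(τ,x) = ∫₀^τ f₁(s,x) ds`, the time derivative
`∂ₜF` is bounded by a constant `C₀` independent of `ε`, provided `f̄, f₁` are `C²`
with derivatives up to order 2 bounded by `M`, `f₁` is 1-periodic and mean-zero in
its first argument, and `ε` is small enough that `‖ε ∂ₓg‖ ≤ 1/2` uniformly. -/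
theorem transformed_drift_nonstiff {d : ℕ} (M : ℝ)
    (fbar : (Fin d → ℝ) → (Fin d → ℝ))
    (f₁ : ℝ → (Fin d → ℝ) → (Fin d → ℝ))
    (g : ℝ → (Fin d → ℝ) → (Fin d → ℝ))
    (hfbarC2 : ContDiff ℝ 2 fbar)
    (hfbarBdd : ∀ i ≤ 2, ∀ x, ‖iteratedFDeriv ℝ i fbar x‖ ≤ M)
    (hf₁C2 : ContDiff ℝ 2 (fun p : ℝ × (Fin d → ℝ) => f₁ p.1 p.2))
    (hf₁Bdd : ∀ i ≤ 2, ∀ p : ℝ × (Fin d → ℝ),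
      ‖iteratedFDeriv ℝ i (fun q : ℝ × (Fin d → ℝ) => f₁ q.1 q.2) p‖ ≤ M)
    (hf₁per : ∀ τ x, f₁ (τ + 1) x = f₁ τ x)
    (hf₁mean : ∀ x, (∫ s in (0:ℝ)..1, f₁ s x) = 0)
    (hgdef : ∀ τ x, g τ x = ∫ s in (0:ℝ)..τ, f₁ s x) :
    ∃ C₀ : ℝ, ∀ ε : ℝ, 0 < ε →
      (∀ τ (x : Fin d → ℝ), ε * ‖fderiv ℝ (g τ) x‖ ≤ 1 / 2) →
      ∀ (t : ℝ) (x : Fin d → ℝ),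
        ‖deriv (fun t' : ℝ =>
            Ring.inverse ((1 : (Fin d → ℝ) →L[ℝ] (Fin d → ℝ))
                + ε • fderiv ℝ (g (t' / ε)) x)
              (fbar x + f₁ (t' / ε) (x + ε • g (t' / ε) x) - f₁ (t' / ε) x)) t‖
          ≤ C₀ := by
  classical
  set Fj : ℝ × (Fin d → ℝ) → (Fin d → ℝ) := fun p => f₁ p.1 p.2 with hFj_def
  -- basic bounds
  have hM0 : 0 ≤ M := by
    have h := hfbarBdd 0 (by norm_num) 0
    rw [norm_iteratedFDeriv_zero] at h
    exact le_trans (norm_nonneg _) h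
  have hFjBdd : ∀ p, ‖Fj p‖ ≤ M := fun p => by
    have := hf₁Bdd 0 (by norm_num) p
    rwa [norm_iteratedFDeriv_zero] at this
  have hDFjBdd : ∀ p, ‖fderiv ℝ Fj p‖ ≤ M := fun p => by
    have h1 : ‖fderiv ℝ Fj p‖ = ‖iteratedFDeriv ℝ 1 Fj p‖ := by
      rw [← norm_iteratedFDeriv_fderiv, norm_iteratedFDeriv_zero]
    rw [h1]; exact hf₁Bdd 1 (by norm_num) p
  have hD2FjBdd : ∀ p, ‖fderiv ℝ (fderiv ℝ Fj) p‖ ≤ M := fun p => by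
    have h1 : ‖fderiv ℝ (fderiv ℝ Fj) p‖ = ‖iteratedFDeriv ℝ 1 (fderiv ℝ Fj) p‖ := by
      rw [← norm_iteratedFDeriv_fderiv, norm_iteratedFDeriv_zero]
    rw [h1, norm_iteratedFDeriv_fderiv]; exact hf₁Bdd 2 (by norm_num) p
  have hFjdiff : Differentiable ℝ Fj := hf₁C2.differentiable two_ne_zero
  have hDFjC1 : ContDiff ℝ 1 (fderiv ℝ Fj) := hf₁C2.fderiv_right le_rfl
  have lipFj : LipschitzWith M.toNNReal Fj :=
    lipschitzWith_of_nnnorm_fderiv_le hFjdiff (fun p => by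
      rw [← NNReal.coe_le_coe, coe_nnnorm, Real.coe_toNNReal M hM0]; exact hDFjBdd p)
  have lipDFj : LipschitzWith M.toNNReal (fderiv ℝ Fj) :=
    lipschitzWith_of_nnnorm_fderiv_le (hDFjC1.differentiable one_ne_zero) (fun p => by
      rw [← NNReal.coe_le_coe, coe_nnnorm, Real.coe_toNNReal M hM0]; exact hD2FjBdd p)
  have hFjlip : ∀ (p q : ℝ × (Fin d → ℝ)), ‖Fj p - Fj q‖ ≤ M * ‖p - q‖ := by
    intro p q
    have := lipFj.dist_le_mul p q
    rwa [dist_eq_norm, dist_eq_norm, Real.coe_toNNReal M hM0] at this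
  have hDFjlip : ∀ (p q : ℝ × (Fin d → ℝ)), ‖fderiv ℝ Fj p - fderiv ℝ Fj q‖ ≤ M * ‖p - q‖ := by
    intro p q
    have := lipDFj.dist_le_mul p q
    rwa [dist_eq_norm, dist_eq_norm, Real.coe_toNNReal M hM0] at this
  -- inclusion map
  set inrE : (Fin d → ℝ) →L[ℝ] ℝ × (Fin d → ℝ) := ContinuousLinearMap.inr ℝ ℝ (Fin d → ℝ)
    with hinrE_def
  have hinr_norm : ‖inrE‖ ≤ 1 := by
    refine ContinuousLinearMap.opNorm_le_bound _ zero_le_one (fun z => ?_)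
    rw [hinrE_def, ContinuousLinearMap.inr_apply, one_mul, Prod.norm_def]
    simp
  have hmk : ∀ (τ : ℝ) (z : Fin d → ℝ), HasFDerivAt (fun z : Fin d → ℝ => ((τ, z) : ℝ × (Fin d → ℝ))) inrE z := by
    intro τ z
    have h := (inrE.hasFDerivAt (x := z)).const_add ((τ, 0) : ℝ × (Fin d → ℝ))
    have heq : (fun z : Fin d → ℝ => ((τ, 0) : ℝ × (Fin d → ℝ)) + inrE z)
        = fun z : Fin d → ℝ => ((τ, z) : ℝ × (Fin d → ℝ)) := by
      funext z
      rw [hinrE_def, ContinuousLinearMap.inr_apply, Prod.mk_add_mk, add_zero, zero_add]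
    rwa [heq] at h
  -- partial x-derivatives
  set D₂ : ℝ → (Fin d → ℝ) → ((Fin d → ℝ) →L[ℝ] (Fin d → ℝ)) :=
    fun s z => (fderiv ℝ Fj (s, z)).comp inrE with hD₂_def
  have hD₂bdd : ∀ s z, ‖D₂ s z‖ ≤ M := by
    intro s z
    refine le_trans (ContinuousLinearMap.opNorm_comp_le _ _) ?_
    calc ‖fderiv ℝ Fj (s, z)‖ * ‖inrE‖ ≤ M * 1 :=
      mul_le_mul (hDFjBdd _) hinr_norm (norm_nonneg _) hM0
    _ = M := mul_one M
  have hpart : ∀ (s : ℝ) (z : Fin d → ℝ), HasFDerivAt (fun w => f₁ s w) (D₂ s z) z := by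
    intro s z
    have h := ((hFjdiff (s, z)).hasFDerivAt).comp z (hmk s z)
    simpa [Function.comp] using h
  -- continuity and integrability
  have hFjcont : Continuous Fj := hf₁C2.continuous
  have hsec_cont : ∀ z : Fin d → ℝ, Continuous (fun s => f₁ s z) := fun z =>
    hFjcont.comp (continuous_id.prodMk continuous_const)
  have hInt : ∀ (z : Fin d → ℝ) (a b : ℝ), IntervalIntegrable (fun s => f₁ s z) volume a b :=
    fun z a b => (hsec_cont z).intervalIntegrable a b
  have hcontD₂ : ∀ z : Fin d → ℝ, Continuous (fun s => D₂ s z) := fun z =>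
    Continuous.clm_comp ((hf₁C2.continuous_fderiv two_ne_zero).comp
      (continuous_id.prodMk continuous_const)) continuous_const
  have hIntD₂ : ∀ (z : Fin d → ℝ) (a b : ℝ), IntervalIntegrable (fun s => D₂ s z) volume a b :=
    fun z a b => (hcontD₂ z).intervalIntegrable a b
  -- derivative of g in x
  have hgderiv : ∀ (τ : ℝ) (x : Fin d → ℝ),
      HasFDerivAt (g τ) (∫ s in (0:ℝ)..τ, D₂ s x) x := by
    intro τ x
    have h := intervalIntegral.hasFDerivAt_integral_of_dominated_loc_of_lip
      (F := fun (z : Fin d → ℝ) (s : ℝ) => f₁ s z) (F' := fun s => D₂ s x)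
      (μ := volume) (a := 0) (b := τ) (x₀ := x) (bound := fun _ => M) (s := Metric.ball x 1)
      (Metric.ball_mem_nhds x one_pos)
      (Filter.Eventually.of_forall fun z => ((hsec_cont z).aestronglyMeasurable))
      (hInt x 0 τ)
      ((hcontD₂ x).aestronglyMeasurable)
      (Filter.Eventually.of_forall fun s _ => by
        have hl : LipschitzWith (M.toNNReal * 1) (fun z : Fin d → ℝ => f₁ s z) :=
          lipFj.comp (LipschitzWith.prodMk_left s)
        rw [mul_one] at hl
        rw [Real.nnabs_of_nonneg hM0]
        exact fun z _ w _ => hl z w)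
      (intervalIntegrable_const)
      (Filter.Eventually.of_forall fun s _ => hpart s x)
    have heq : g τ = fun z => ∫ s in (0:ℝ)..τ, f₁ s z := funext (hgdef τ)
    rw [heq]
    exact h.2
  have hfderivg : ∀ (τ : ℝ) (x : Fin d → ℝ),
      fderiv ℝ (g τ) x = ∫ s in (0:ℝ)..τ, D₂ s x := fun τ x => (hgderiv τ x).fderiv
  -- Lipschitz of fderiv g in τ
  have hBdiff : ∀ (τ₁ τ₂ : ℝ) (x : Fin d → ℝ),
      ‖fderiv ℝ (g τ₁) x - fderiv ℝ (g τ₂) x‖ ≤ M * |τ₁ - τ₂| := by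
    intro τ₁ τ₂ x
    rw [hfderivg, hfderivg]
    rw [intervalIntegral.integral_interval_sub_left (hIntD₂ x 0 τ₁) (hIntD₂ x 0 τ₂)]
    exact intervalIntegral.norm_integral_le_of_norm_le_const (fun s _ => hD₂bdd s x)
  -- Lipschitz of g values in τ
  have hglip : ∀ (x : Fin d → ℝ) (τ₁ τ₂ : ℝ), ‖g τ₁ x - g τ₂ x‖ ≤ M * |τ₁ - τ₂| := by
    intro x τ₁ τ₂
    rw [hgdef, hgdef,
      intervalIntegral.integral_interval_sub_left (hInt x 0 τ₁) (hInt x 0 τ₂)]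
    exact intervalIntegral.norm_integral_le_of_norm_le_const (fun s _ => hFjBdd (s, x))
  -- boundedness of g
  have hgbdd : ∀ (τ : ℝ) (x : Fin d → ℝ), ‖g τ x‖ ≤ M := by
    intro τ x
    have hper : Function.Periodic (fun τ => g τ x) 1 := by
      intro σ
      simp only [hgdef]
      have h1 : ∫ s in (0:ℝ)..(σ+1), f₁ s x
          = (∫ s in (0:ℝ)..σ, f₁ s x) + ∫ s in σ..(σ+1), f₁ s x :=
        (intervalIntegral.integral_add_adjacent_intervals (hInt x 0 σ) (hInt x σ (σ+1))).symm
      have hperf : Function.Periodic (fun s => f₁ s x) 1 := fun s => hf₁per s x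
      have h2 : ∫ s in σ..(σ+1), f₁ s x = ∫ s in (0:ℝ)..(0+1), f₁ s x :=
        hperf.intervalIntegral_add_eq σ 0
      rw [h1, h2, zero_add, hf₁mean x, add_zero]
    have h3 : g τ x = g (Int.fract τ) x := by
      have h := hper.sub_zsmul_eq (x := τ) ⌊τ⌋
      simp only [zsmul_eq_mul, mul_one] at h
      rw [← Int.self_sub_floor τ] at *
      exact h.symm
    rw [h3, hgdef]
    refine le_trans (intervalIntegral.norm_integral_le_of_norm_le_const
      (fun s _ => hFjBdd (s, x))) ?_
    have h4 : |Int.fract τ - 0| ≤ 1 := by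
      rw [sub_zero, abs_of_nonneg (Int.fract_nonneg τ)]
      exact (Int.fract_lt_one τ).le
    nlinarith
  -- double difference estimate
  have hdd : ∀ (τ₁ τ₂ : ℝ) (y x : Fin d → ℝ),
      ‖(f₁ τ₁ y - f₁ τ₁ x) - (f₁ τ₂ y - f₁ τ₂ x)‖ ≤ M * |τ₁ - τ₂| * ‖y - x‖ := by
    intro τ₁ τ₂ y x
    have hC0 : 0 ≤ M * |τ₁ - τ₂| := mul_nonneg hM0 (abs_nonneg _)
    have hGder : ∀ z, HasFDerivAt (fun w => f₁ τ₁ w - f₁ τ₂ w) (D₂ τ₁ z - D₂ τ₂ z) z :=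
      fun z => (hpart τ₁ z).sub (hpart τ₂ z)
    have hGbdd : ∀ z, ‖D₂ τ₁ z - D₂ τ₂ z‖ ≤ M * |τ₁ - τ₂| := by
      intro z
      have h1 : D₂ τ₁ z - D₂ τ₂ z = (fderiv ℝ Fj (τ₁, z) - fderiv ℝ Fj (τ₂, z)).comp inrE := by
        rw [hD₂_def]; ext w; simp
      rw [h1]
      refine le_trans (ContinuousLinearMap.opNorm_comp_le _ _) ?_
      have h2 : ‖fderiv ℝ Fj (τ₁, z) - fderiv ℝ Fj (τ₂, z)‖ ≤ M * |τ₁ - τ₂| := by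
        have := hDFjlip (τ₁, z) (τ₂, z)
        have h3 : ‖((τ₁, z) : ℝ × (Fin d → ℝ)) - (τ₂, z)‖ = |τ₁ - τ₂| := by
          rw [Prod.norm_def]
          simp [Real.norm_eq_abs]
        rwa [h3] at this
      calc ‖fderiv ℝ Fj (τ₁, z) - fderiv ℝ Fj (τ₂, z)‖ * ‖inrE‖ ≤ (M * |τ₁ - τ₂|) * 1 :=
        mul_le_mul h2 hinr_norm (norm_nonneg _) hC0
      _ = M * |τ₁ - τ₂| := mul_one _
    have hlipG : LipschitzWith (M * |τ₁ - τ₂|).toNNReal (fun w => f₁ τ₁ w - f₁ τ₂ w) := by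
      refine lipschitzWith_of_nnnorm_fderiv_le (fun z => (hGder z).differentiableAt) ?_
      intro z
      rw [← NNReal.coe_le_coe, coe_nnnorm, Real.coe_toNNReal _ hC0, (hGder z).fderiv]
      exact hGbdd z
    have h9 := hlipG.dist_le_mul y x
    rw [dist_eq_norm, dist_eq_norm, Real.coe_toNNReal _ hC0] at h9
    rw [show (f₁ τ₁ y - f₁ τ₁ x) - (f₁ τ₂ y - f₁ τ₂ x)
      = (f₁ τ₁ y - f₁ τ₂ y) - (f₁ τ₁ x - f₁ τ₂ x) from by abel]
    exact h9
  -- main bound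
  refine ⟨16 * M ^ 2, ?_⟩
  intro ε hε hsmall t x
  set A : ℝ → ((Fin d → ℝ) →L[ℝ] (Fin d → ℝ)) := fun t' =>
    (1 : (Fin d → ℝ) →L[ℝ] (Fin d → ℝ)) + ε • fderiv ℝ (g (t' / ε)) x with hA_def
  set q : ℝ → (Fin d → ℝ) := fun t' =>
    fbar x + f₁ (t' / ε) (x + ε • g (t' / ε) x) - f₁ (t' / ε) x with hq_def
  have hns : ∀ (B : (Fin d → ℝ) →L[ℝ] (Fin d → ℝ)), ‖ε • B‖ = ε * ‖B‖ := fun B => by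
    rw [@norm_smul ℝ _ _ _ _ _ ε B, Real.norm_eq_abs, abs_of_pos hε]
  have hnsv : ∀ (v : Fin d → ℝ), ‖ε • v‖ = ε * ‖v‖ := fun v => by
    rw [@norm_smul ℝ _ _ _ _ _ ε v, Real.norm_eq_abs, abs_of_pos hε]
  have hA1 : ∀ t', ‖A t' - 1‖ ≤ 1 / 2 := by
    intro t'
    rw [hA_def]
    simp only [add_sub_cancel_left]
    rw [hns]
    exact hsmall (t' / ε) x
  have hdiv : ∀ t₁ t₂ : ℝ, |t₁ / ε - t₂ / ε| = |t₁ - t₂| / ε := by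
    intro t₁ t₂
    rw [div_sub_div_same, abs_div, abs_of_pos hε]
  have hAlip : ∀ t₁ t₂ : ℝ, ‖A t₁ - A t₂‖ ≤ M * |t₁ - t₂| := by
    intro t₁ t₂
    have h1 : A t₁ - A t₂ = ε • (fderiv ℝ (g (t₁ / ε)) x - fderiv ℝ (g (t₂ / ε)) x) := by
      rw [hA_def]; simp only [add_sub_add_left_eq_sub, smul_sub]
    rw [h1, hns]
    calc ε * ‖fderiv ℝ (g (t₁ / ε)) x - fderiv ℝ (g (t₂ / ε)) x‖
        ≤ ε * (M * |t₁ / ε - t₂ / ε|) := by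
          exact mul_le_mul_of_nonneg_left (hBdiff _ _ x) hε.le
    _ = M * |t₁ - t₂| := by
          rw [hdiv]; field_simp
  have hqbdd : ∀ t', ‖q t'‖ ≤ 3 * M := by
    intro t'
    rw [hq_def]
    calc ‖fbar x + f₁ (t' / ε) (x + ε • g (t' / ε) x) - f₁ (t' / ε) x‖
        ≤ ‖fbar x + f₁ (t' / ε) (x + ε • g (t' / ε) x)‖ + ‖f₁ (t' / ε) x‖ := norm_sub_le _ _
    _ ≤ ‖fbar x‖ + ‖f₁ (t' / ε) (x + ε • g (t' / ε) x)‖ + ‖f₁ (t' / ε) x‖ := by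
          have := norm_add_le (fbar x) (f₁ (t' / ε) (x + ε • g (t' / ε) x))
          linarith
    _ ≤ M + M + M := by
          have h1 : ‖fbar x‖ ≤ M := by
            have := hfbarBdd 0 (by norm_num) x
            rwa [norm_iteratedFDeriv_zero] at this
          have h2 := hFjBdd (t' / ε, x + ε • g (t' / ε) x)
          have h3 := hFjBdd (t' / ε, x)
          exact add_le_add (add_le_add h1 h2) h3
    _ = 3 * M := by ring
  have hqlip : ∀ t₁ t₂ : ℝ, ‖q t₁ - q t₂‖ ≤ 2 * M ^ 2 * |t₁ - t₂| := by
    intro t₁ t₂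
    set τ₁ := t₁ / ε
    set τ₂ := t₂ / ε
    set y₁ := x + ε • g τ₁ x with hy₁
    set y₂ := x + ε • g τ₂ x with hy₂
    have hsplit : q t₁ - q t₂ = (f₁ τ₁ y₁ - f₁ τ₁ y₂)
        + ((f₁ τ₁ y₂ - f₁ τ₁ x) - (f₁ τ₂ y₂ - f₁ τ₂ x)) := by
      rw [hq_def]; beta_reduce; unfold y₁ y₂ τ₁ τ₂; abel
    have hterm1 : ‖f₁ τ₁ y₁ - f₁ τ₁ y₂‖ ≤ M ^ 2 * |t₁ - t₂| := by
      have h1 := hFjlip (τ₁, y₁) (τ₁, y₂)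
      have h2 : ‖((τ₁, y₁) : ℝ × (Fin d → ℝ)) - (τ₁, y₂)‖ = ‖y₁ - y₂‖ := by
        rw [Prod.norm_def]; simp
      rw [h2] at h1
      have h3 : ‖y₁ - y₂‖ ≤ M * |t₁ - t₂| := by
        rw [hy₁, hy₂, add_sub_add_left_eq_sub, ← smul_sub, hnsv]
        calc ε * ‖g τ₁ x - g τ₂ x‖ ≤ ε * (M * |τ₁ - τ₂|) :=
          mul_le_mul_of_nonneg_left (hglip x τ₁ τ₂) hε.le
        _ = M * |t₁ - t₂| := by rw [hdiv]; field_simp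
      calc ‖f₁ τ₁ y₁ - f₁ τ₁ y₂‖ ≤ M * ‖y₁ - y₂‖ := h1
      _ ≤ M * (M * |t₁ - t₂|) := mul_le_mul_of_nonneg_left h3 hM0
      _ = M ^ 2 * |t₁ - t₂| := by ring
    have hterm2 : ‖(f₁ τ₁ y₂ - f₁ τ₁ x) - (f₁ τ₂ y₂ - f₁ τ₂ x)‖ ≤ M ^ 2 * |t₁ - t₂| := by
      have h1 := hdd τ₁ τ₂ y₂ x
      have h2 : ‖y₂ - x‖ ≤ ε * M := by
        rw [hy₂, add_sub_cancel_left, hnsv]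
        exact mul_le_mul_of_nonneg_left (hgbdd τ₂ x) hε.le
      have h3 : M * |τ₁ - τ₂| * ‖y₂ - x‖ ≤ M * (|t₁ - t₂| / ε) * (ε * M) := by
        have h4 : M * |τ₁ - τ₂| = M * (|t₁ - t₂| / ε) := by rw [hdiv]
        rw [← h4]
        exact mul_le_mul_of_nonneg_left h2 (mul_nonneg hM0 (abs_nonneg _))
      have h5 : M * (|t₁ - t₂| / ε) * (ε * M) = M ^ 2 * |t₁ - t₂| := by
        field_simp
      linarith
    calc ‖q t₁ - q t₂‖ ≤ ‖f₁ τ₁ y₁ - f₁ τ₁ y₂‖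
        + ‖(f₁ τ₁ y₂ - f₁ τ₁ x) - (f₁ τ₂ y₂ - f₁ τ₂ x)‖ := by
          rw [hsplit]; exact norm_add_le _ _
    _ ≤ 2 * M ^ 2 * |t₁ - t₂| := by linarith
  -- assemble
  have hG : ∀ t₁ t₂ : ℝ, ‖Ring.inverse (A t₁) (q t₁) - Ring.inverse (A t₂) (q t₂)‖
      ≤ 16 * M ^ 2 * |t₁ - t₂| := by
    intro t₁ t₂
    obtain ⟨-, -, hN₂⟩ := nonstiff_inv_aux (A t₂) (hA1 t₂)
    have hdiffI := nonstiff_inv_diff_aux (A t₁) (A t₂) (hA1 t₁) (hA1 t₂)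
    have hsplit : Ring.inverse (A t₁) (q t₁) - Ring.inverse (A t₂) (q t₂)
        = (Ring.inverse (A t₁) - Ring.inverse (A t₂)) (q t₁)
          + Ring.inverse (A t₂) (q t₁ - q t₂) := by
      simp only [ContinuousLinearMap.sub_apply, map_sub]
      abel
    rw [hsplit]
    have h1 : ‖(Ring.inverse (A t₁) - Ring.inverse (A t₂)) (q t₁)‖
        ≤ (4 * (M * |t₁ - t₂|)) * (3 * M) := by
      refine le_trans (ContinuousLinearMap.le_opNorm _ _) ?_
      have h2 : ‖Ring.inverse (A t₁) - Ring.inverse (A t₂)‖ ≤ 4 * (M * |t₁ - t₂|) := by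
        refine hdiffI.trans ?_
        have := hAlip t₁ t₂
        linarith
      exact mul_le_mul h2 (hqbdd t₁) (norm_nonneg _) (by positivity)
    have h3 : ‖Ring.inverse (A t₂) (q t₁ - q t₂)‖ ≤ 2 * (2 * M ^ 2 * |t₁ - t₂|) := by
      refine le_trans (ContinuousLinearMap.le_opNorm _ _) ?_
      exact mul_le_mul hN₂ (hqlip t₁ t₂) (norm_nonneg _) (by norm_num)
    calc ‖(Ring.inverse (A t₁) - Ring.inverse (A t₂)) (q t₁)
          + Ring.inverse (A t₂) (q t₁ - q t₂)‖
        ≤ ‖(Ring.inverse (A t₁) - Ring.inverse (A t₂)) (q t₁)‖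
          + ‖Ring.inverse (A t₂) (q t₁ - q t₂)‖ := norm_add_le _ _
    _ ≤ (4 * (M * |t₁ - t₂|)) * (3 * M) + 2 * (2 * M ^ 2 * |t₁ - t₂|) := add_le_add h1 h3
    _ = 16 * M ^ 2 * |t₁ - t₂| := by ring
  refine norm_deriv_le_of_lip' (by positivity) (Filter.Eventually.of_forall fun t' => ?_)
  have hshow : ∀ s : ℝ, Ring.inverse ((1 : (Fin d → ℝ) →L[ℝ] (Fin d → ℝ))
      + ε • fderiv ℝ (g (s / ε)) x)
      (fbar x + f₁ (s / ε) (x + ε • g (s / ε) x) - f₁ (s / ε) x)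
      = Ring.inverse (A s) (q s) := fun s => rfl
  rw [hshow, hshow, Real.norm_eq_abs]
  exact hG t' t
end
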